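/- Let (τ, α) be a plane tree with n edges on H (|H| = 2n, n ≥ 1) rooted at t ∈ H with root-to-leaves orientation (I, O), and let (π, α') be a mobile on H' = H ∪ {i,o} coherently attached to this tree. Define σ' = τ'∘π_{|I'} (with π_{|I'} viewed as a permutation of H' fixing O'), σ = σ'_{|H}, and r = σ'(i). Then: (a) r ∈ H and the permutations σ and α generate a subgroup acting transitively on H, so (σ,α) is a combinatorial map; (b) the orientation (I,O) is left-connected for (σ,α) rooted at r: for every h ∈ H there exists q > 0 with β^q(h) = r, where β(h) = σ(h) if h ∈ O and β(h) = σ(α(h)) if h ∈ I; (c) π_{|I'} = σ'_{|I'} and (π⁻¹)_{|O'} = ((i,o)∘σ'∘α')_{|O'}, so that the unfolding of ((σ,α),(I,O)) returns the given tree and mobile. -/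

import Mathlib

/-- First-return restriction of `f` to `S`, viewed as a map on the whole set
(acting as the identity outside `S`). -/
noncomputable def restrictFun {X : Type*} (f : X → X) (S : Set X) (x : X) : X := by
  classical
  exact if hx : x ∈ S ∧ ∃ k : ℕ, 0 < k ∧ f^[k] x ∈ S then f^[Nat.find hx.2] x else x

/-- `(σ,α)` is a combinatorial map. -/
def IsCombMap {X : Type*} (σ α : Equiv.Perm X) : Prop :=
  (∀ h, α h ≠ h) ∧ (∀ h, α (α h) = h) ∧
    ∀ x y : X, ∃ g ∈ Subgroup.closure ({σ, α} : Set (Equiv.Perm X)), g x = y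

/-- The backward function of an orientation with ingoing set `I`. -/
noncomputable def backward {X : Type*} (σ α : Equiv.Perm X) (I : Set X) (h : X) : X := by
  classical
  exact if h ∈ I then σ (α h) else σ h

/-- The number of orbits of `f` on `S` (forward orbits inside `S`). -/
noncomputable def numOrbitsOn {X : Type*} (f : X → X) (S : Set X) : ℕ :=
  ((fun x => {y | y ∈ S ∧ ∃ k : ℕ, f^[k] x = y}) '' S).ncard

/-- `H' = H ⊕ Bool`, where `i = Sum.inr true` and `o = Sum.inr false` are the two new
half-edges. The extended edge-involution `α'` acts as `α` on `H` and swaps `i` and `o`. -/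
def alphaExt {H : Type*} (α : Equiv.Perm H) : Equiv.Perm (H ⊕ Bool) :=
  Equiv.sumCongr α (Equiv.swap true false)

/-- The extended vertex-permutation `σ'` of the unfolding construction: `σ' i = r`,
`σ' (σ⁻¹ r) = i`, `σ' o = o` and `σ' = σ` elsewhere. -/
noncomputable def sigmaExt {H : Type*} (σ : Equiv.Perm H) (r : H) :
    Equiv.Perm (H ⊕ Bool) := by
  classical
  exact Equiv.sumCongr σ (1 : Equiv.Perm Bool) *
    Equiv.swap (Sum.inr true) (Sum.inl (σ⁻¹ r))

section AuxiliaryLemmas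

lemma Equiv.Perm.apply_inv_self {X : Type*} (f : Equiv.Perm X) (x : X) : f (f⁻¹ x) = x :=
  Equiv.apply_symm_apply f x

lemma Equiv.Perm.inv_apply_self {X : Type*} (f : Equiv.Perm X) (x : X) : f⁻¹ (f x) = x :=
  Equiv.symm_apply_apply f x

lemma restrictFun_of_not_mem {X : Type*} (f : X → X) (S : Set X) (x : X) (hx : x ∉ S) :
    restrictFun f S x = x := by
  classical
  simp only [restrictFun]
  rw [dif_neg]
  rintro ⟨h, -⟩; exact hx h

lemma restrictFun_eq_of {X : Type*} (f : X → X) (S : Set X) (x : X) (hx : x ∈ S) (m : ℕ)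
    (hm : 0 < m) (hmem : f^[m] x ∈ S) (hmin : ∀ j, 0 < j → j < m → f^[j] x ∉ S) :
    restrictFun f S x = f^[m] x := by
  classical
  have hex : ∃ k : ℕ, 0 < k ∧ f^[k] x ∈ S := ⟨m, hm, hmem⟩
  simp only [restrictFun]
  rw [dif_pos ⟨hx, hex⟩]
  have : Nat.find (⟨hx, hex⟩ : x ∈ S ∧ ∃ k : ℕ, 0 < k ∧ f^[k] x ∈ S).2 = m := by
    rw [Nat.find_eq_iff]
    refine ⟨⟨hm, hmem⟩, fun k hk hP => ?_⟩
    exact hmin k hP.1 hk hP.2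
  rw [this]

lemma restrictFun_mem {X : Type*} (f : X → X) (S : Set X) (x : X) (hx : x ∈ S)
    (hex : ∃ k : ℕ, 0 < k ∧ f^[k] x ∈ S) : restrictFun f S x ∈ S := by
  classical
  simp only [restrictFun]
  rw [dif_pos ⟨hx, hex⟩]
  exact (Nat.find_spec (⟨hx, hex⟩ : x ∈ S ∧ ∃ k : ℕ, 0 < k ∧ f^[k] x ∈ S).2).2

lemma restrictFun_exists_iter {X : Type*} (f : X → X) (S : Set X) (x : X) (hx : x ∈ S)
    (hex : ∃ k : ℕ, 0 < k ∧ f^[k] x ∈ S) : ∃ m : ℕ, restrictFun f S x = f^[m] x := by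
  classical
  simp only [restrictFun]
  rw [dif_pos ⟨hx, hex⟩]
  exact ⟨_, rfl⟩

lemma exists_iterate_mem {X : Type*} [Finite X] (f : Equiv.Perm X) (S : Set X) (y : X)
    (hy : y ∈ S) : ∃ m : ℕ, 0 < m ∧ (⇑f)^[m] y ∈ S := by
  refine ⟨orderOf f, orderOf_pos f, ?_⟩
  rw [Equiv.Perm.iterate_eq_pow, pow_orderOf_eq_one]
  simpa using hy

lemma comp_iterate {X : Type*} (u v : X → X) (S : Set X) (hv : ∀ z, z ∉ S → v z = z) (x : X)
    (j : ℕ) (hj : 1 ≤ j) (hout : ∀ j', 1 ≤ j' → j' < j → u^[j'] (v x) ∉ S) :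
    (u ∘ v)^[j] x = u^[j] (v x) := by
  induction j with
  | zero => omega
  | succ j ih =>
    rcases Nat.eq_or_lt_of_le hj with h1 | h1
    · simp [← h1]
    · have hj' : 1 ≤ j := by omega
      have ih' := ih hj' (fun j' a b => hout j' a (by omega))
      rw [Function.iterate_succ_apply', ih', Function.iterate_succ_apply']
      have : v (u^[j] (v x)) = u^[j] (v x) := hv _ (hout j hj' (by omega))
      simp [Function.comp, this]

lemma FR_comp {X : Type*} (u v : X → X) (S : Set X) (hv : ∀ z, z ∉ S → v z = z) (x : X)
    (hx : x ∈ S) (hvx : v x ∈ S) (hex : ∃ m : ℕ, 0 < m ∧ u^[m] (v x) ∈ S) :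
    restrictFun (u ∘ v) S x = restrictFun u S (v x) := by
  classical
  have hm := Nat.find_spec hex
  set m := Nat.find hex with hmdef
  have hmin : ∀ j, 0 < j → j < m → u^[j] (v x) ∉ S := by
    intro j hj hjm hmem
    exact Nat.find_min hex hjm ⟨hj, hmem⟩
  have h1 : restrictFun u S (v x) = u^[m] (v x) :=
    restrictFun_eq_of u S (v x) hvx m hm.1 hm.2 hmin
  have h2 : restrictFun (u ∘ v) S x = (u ∘ v)^[m] x := by
    refine restrictFun_eq_of (u ∘ v) S x hx m hm.1 ?_ ?_
    · rw [comp_iterate u v S hv x m hm.1 hmin]; exact hm.2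
    · intro j hj hjm
      rw [comp_iterate u v S hv x j hj (fun j' a b => hmin j' a (by omega))]
      exact hmin j hj hjm
  rw [h1, h2, comp_iterate u v S hv x m hm.1 hmin]

lemma backward_of_mem {X : Type*} (σ α : Equiv.Perm X) (I : Set X) (h : X) (hh : h ∈ I) :
    backward σ α I h = σ (α h) := by simp only [backward]; rw [if_pos hh]

lemma backward_of_not_mem {X : Type*} (σ α : Equiv.Perm X) (I : Set X) (h : X) (hh : h ∉ I) :
    backward σ α I h = σ h := by simp only [backward]; rw [if_neg hh]

lemma alphaExt_inl {H : Type*} (α : Equiv.Perm H) (a : H) :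
    alphaExt α (Sum.inl a) = Sum.inl (α a) := rfl

lemma alphaExt_true {H : Type*} (α : Equiv.Perm H) :
    alphaExt α (Sum.inr true) = Sum.inr false := by simp [alphaExt]

lemma alphaExt_false {H : Type*} (α : Equiv.Perm H) :
    alphaExt α (Sum.inr false) = Sum.inr true := by simp [alphaExt]

lemma sigmaExt_inl_ne {H : Type*} (τ : Equiv.Perm H) (t : H) (a : H) (h : a ≠ τ⁻¹ t) :
    sigmaExt τ t (Sum.inl a) = Sum.inl (τ a) := by
  classical
  simp only [sigmaExt, Equiv.Perm.mul_apply]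
  rw [Equiv.swap_apply_of_ne_of_ne (by simp) (by simpa using h)]
  rfl

lemma sigmaExt_root {H : Type*} (τ : Equiv.Perm H) (t : H) :
    sigmaExt τ t (Sum.inl (τ⁻¹ t)) = Sum.inr true := by
  classical
  simp only [sigmaExt, Equiv.Perm.mul_apply]
  rw [Equiv.swap_apply_right]
  rfl

lemma sigmaExt_i {H : Type*} (τ : Equiv.Perm H) (t : H) :
    sigmaExt τ t (Sum.inr true) = Sum.inl t := by
  classical
  simp only [sigmaExt, Equiv.Perm.mul_apply]
  rw [Equiv.swap_apply_left]
  simp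

lemma sigmaExt_orbit_inl {H : Type*} (τ : Equiv.Perm H) (t : H) (a : H)
    (ha : ¬ τ.SameCycle t a) (m : ℕ) :
    (⇑(sigmaExt τ t))^[m] (Sum.inl a) = Sum.inl ((⇑τ)^[m] a) := by
  induction m with
  | zero => rfl
  | succ m ih =>
    rw [Function.iterate_succ_apply', ih, Function.iterate_succ_apply']
    apply sigmaExt_inl_ne
    intro he
    apply ha
    have h1 : τ.SameCycle t ((⇑τ)^[m] a) := by rw [he]; exact ⟨-1, by simp⟩
    have h2 : τ.SameCycle a ((⇑τ)^[m] a) :=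
      ⟨(m : ℤ), by rw [zpow_natCast, ← Equiv.Perm.iterate_eq_pow]⟩
    exact h1.trans h2.symm

lemma sigmaExt_orbit_i {H : Type*} (τ : Equiv.Perm H) (t : H) (m : ℕ) :
    (⇑(sigmaExt τ t))^[m] (Sum.inr true) = Sum.inr true ∨
      ∃ b : H, τ.SameCycle t b ∧ (⇑(sigmaExt τ t))^[m] (Sum.inr true) = Sum.inl b := by
  induction m with
  | zero => left; rfl
  | succ m ih =>
    rcases ih with h | ⟨b, hb, he⟩
    · right
      exact ⟨t, Equiv.Perm.SameCycle.refl τ t,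
        by rw [Function.iterate_succ_apply', h, sigmaExt_i]⟩
    · by_cases hbr : b = τ⁻¹ t
      · left
        rw [Function.iterate_succ_apply', he, hbr, sigmaExt_root]
      · right
        exact ⟨τ b, hb.apply_right, by rw [Function.iterate_succ_apply', he,
          sigmaExt_inl_ne τ t b hbr]⟩

lemma sigmaExt_fr {H : Type*} [Fintype H] [DecidableEq H] (τ : Equiv.Perm H) (t : H)
    (I : Set H) (hroot : ∀ y ∈ I, ¬ τ.SameCycle t y)
    (hone : ∀ x : H, ¬ τ.SameCycle t x → ∃! y : H, y ∈ I ∧ τ.SameCycle x y)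
    (y : H ⊕ Bool) (hy : y ∈ (Sum.inl '' I ∪ {Sum.inr true} : Set (H ⊕ Bool))) :
    restrictFun (⇑(sigmaExt τ t)) (Sum.inl '' I ∪ {Sum.inr true}) y = y := by
  classical
  have hex := exists_iterate_mem (sigmaExt τ t) (Sum.inl '' I ∪ {Sum.inr true}) y hy
  obtain ⟨m, hval⟩ := restrictFun_exists_iter (⇑(sigmaExt τ t))
    (Sum.inl '' I ∪ {Sum.inr true}) y hy hex
  have hmem := restrictFun_mem (⇑(sigmaExt τ t)) (Sum.inl '' I ∪ {Sum.inr true}) y hy hex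
  rw [hval] at hmem ⊢
  rcases y with a | b
  · have haI : a ∈ I := by simpa using hy
    have ha : ¬ τ.SameCycle t a := hroot a haI
    rw [sigmaExt_orbit_inl τ t a ha m] at hmem ⊢
    have hmI : (⇑τ)^[m] a ∈ I := by simpa using hmem
    obtain ⟨y0, hy0, huniq⟩ := hone a ha
    have h1 : (⇑τ)^[m] a = y0 :=
      huniq _ ⟨hmI, ⟨(m : ℤ), by rw [zpow_natCast, ← Equiv.Perm.iterate_eq_pow]⟩⟩
    have h2 : a = y0 := huniq _ ⟨haI, Equiv.Perm.SameCycle.refl τ a⟩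
    rw [h1, h2]
  · cases b with
    | false => simp at hy
    | true =>
      rcases sigmaExt_orbit_i τ t m with h | ⟨c, hc, he⟩
      · rw [h]
      · rw [he] at hmem
        have : c ∈ I := by simpa using hmem
        exact (hroot c this hc).elim

lemma tree_backward_reaches {H : Type*} [Fintype H] [DecidableEq H] (τ α : Equiv.Perm H)
    (hinv : ∀ h, α (α h) = h)
    (htrans : ∀ x y : H, ∃ g ∈ Subgroup.closure ({τ, α} : Set (Equiv.Perm H)), g x = y)
    (t : H) (I O : Set H)
    (hpart : I ∪ O = Set.univ) (hIO : α '' I = O)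
    (hroot : ∀ y ∈ I, ¬ τ.SameCycle t y)
    (hone : ∀ x : H, ¬ τ.SameCycle t x → ∃! y : H, y ∈ I ∧ τ.SameCycle x y) :
    ∀ h : H, ∃ m : ℕ, (backward τ α I)^[m] h = τ⁻¹ t := by
  classical
  set b := backward τ α I with hb
  set A : H → Prop := fun h => ∃ m : ℕ, b^[m] h = τ⁻¹ t with hA
  have hOI : ∀ x ∈ O, α x ∈ I := by
    intro x hx
    rw [← hIO] at hx
    obtain ⟨y, hyI, hyx⟩ := hx
    rw [← hyx, hinv y]; exact hyI
  have hIor : ∀ x : H, x ∉ I → x ∈ O := by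
    intro x hx
    have h2 : x ∈ I ∪ O := hpart ▸ Set.mem_univ x
    rcases h2 with h2 | h2
    · exact absurd h2 hx
    · exact h2
  have hct : τ.SameCycle t (τ⁻¹ t) := ⟨-1, by simp⟩
  have iter_rot : ∀ (k : ℕ) (z : H), (∀ j, j < k → (⇑τ)^[j] z ∉ I) → b^[k] z = (⇑τ)^[k] z := by
    intro k
    induction k with
    | zero => intro z _; rfl
    | succ k ih =>
      intro z hz
      have hz0 : z ∉ I := hz 0 (Nat.succ_pos k)
      have hbz : b z = τ z := backward_of_not_mem τ α I z hz0
      rw [Function.iterate_succ_apply, Function.iterate_succ_apply, hbz]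
      exact ih (τ z) (fun j hj => by
        have := hz (j + 1) (by omega)
        rwa [Function.iterate_succ_apply] at this)
  have root_in_A : ∀ x : H, τ.SameCycle t x → A x := by
    intro x hx
    have hsc : τ.SameCycle x (τ⁻¹ t) := hx.symm.trans hct
    obtain ⟨i, -, -, hpow⟩ := hsc.exists_pow_eq''
    refine ⟨i, ?_⟩
    have hrot : b^[i] x = (⇑τ)^[i] x := by
      refine iter_rot i x (fun j _ hjI => ?_)
      have : τ.SameCycle t ((⇑τ)^[j] x) := by
        refine hx.trans ⟨(j : ℤ), ?_⟩
        rw [zpow_natCast, ← Equiv.Perm.iterate_eq_pow]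
      exact hroot _ hjI this
    rw [hrot, Equiv.Perm.iterate_eq_pow, hpow]
  have forwardA : ∀ x : H, A x → A (b x) := by
    rintro x ⟨m, hm⟩
    cases m with
    | zero =>
      simp only [Function.iterate_zero, id] at hm
      subst hm
      have hnotI : τ⁻¹ t ∉ I := fun hI => hroot _ hI hct
      have : b (τ⁻¹ t) = t := by
        rw [hb, backward_of_not_mem τ α I _ hnotI, Equiv.Perm.apply_inv_self]
      rw [this]; exact root_in_A t (Equiv.Perm.SameCycle.refl τ t)
    | succ m => exact ⟨m, by rw [← Function.iterate_succ_apply]; exact hm⟩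
  have forward_iter : ∀ (k : ℕ) (x : H), A x → A (b^[k] x) := by
    intro k
    induction k with
    | zero => intro x hx; exact hx
    | succ k ih => intro x hx; rw [Function.iterate_succ_apply]; exact ih (b x) (forwardA x hx)
  have backward_iter : ∀ (k : ℕ) (x : H), A (b^[k] x) → A x := by
    rintro k x ⟨m, hm⟩
    exact ⟨m + k, by rw [Function.iterate_add_apply]; exact hm⟩
  have reach : ∀ z : H, ¬ τ.SameCycle t z → ∀ y : H, y ∈ I → τ.SameCycle z y →
      ∃ j : ℕ, b^[j] z = y := by
    intro z hz y hyI hzy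
    obtain ⟨i, -, -, hpow⟩ := hzy.exists_pow_eq''
    have hex : ∃ k : ℕ, (⇑τ)^[k] z = y := ⟨i, by rw [Equiv.Perm.iterate_eq_pow]; exact hpow⟩
    have hks : (⇑τ)^[Nat.find hex] z = y := Nat.find_spec hex
    have hmin : ∀ j, j < Nat.find hex → (⇑τ)^[j] z ∉ I := by
      intro j hj hjI
      have hscj : τ.SameCycle z ((⇑τ)^[j] z) := ⟨(j : ℤ), by
        rw [zpow_natCast, ← Equiv.Perm.iterate_eq_pow]⟩
      obtain ⟨y0, hy0, huniq⟩ := hone z hz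
      have h1 : (⇑τ)^[j] z = y0 := huniq _ ⟨hjI, hscj⟩
      have h2 : y = y0 := huniq _ ⟨hyI, hzy⟩
      exact Nat.find_min hex hj (h1.trans h2.symm)
    exact ⟨Nat.find hex, by rw [iter_rot (Nat.find hex) z hmin]; exact hks⟩
  have cycleA : ∀ x z : H, A x → τ.SameCycle x z → A z := by
    intro x z hAx hxz
    by_cases htx : τ.SameCycle t x
    · exact root_in_A z (htx.trans hxz)
    · have htz : ¬ τ.SameCycle t z := fun h => htx (h.trans hxz.symm)
      obtain ⟨y, ⟨hyI, hxy⟩, -⟩ := hone x htx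
      obtain ⟨j1, hj1⟩ := reach x htx y hyI hxy
      have hAy : A y := hj1 ▸ forward_iter j1 x hAx
      obtain ⟨j2, hj2⟩ := reach z htz y hyI (hxz.symm.trans hxy)
      exact backward_iter j2 z (hj2 ▸ hAy)
  have tauA : ∀ x : H, A x → A (τ x) := fun x hx =>
    cycleA x (τ x) hx ⟨1, by simp⟩
  have tauinvA : ∀ x : H, A x → A (τ⁻¹ x) := fun x hx =>
    cycleA x (τ⁻¹ x) hx ⟨-1, by simp⟩
  have alphaA : ∀ x : H, A x → A (α x) := by
    intro x hAx
    by_cases hαI : α x ∈ I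
    · have hbα : b (α x) = τ x := by
        rw [hb, backward_of_mem τ α I _ hαI, hinv x]
      refine backward_iter 1 (α x) ?_
      simpa [hbα] using tauA x hAx
    · have hxI : x ∈ I := by
        by_contra hxI
        exact hαI (hOI x (hIor x hxI))
      have hbx : b x = τ (α x) := backward_of_mem τ α I x hxI
      have hbα : b (α x) = τ (α x) := backward_of_not_mem τ α I _ hαI
      refine backward_iter 1 (α x) ?_
      have : A (b x) := forwardA x hAx
      simpa [hbα, ← hbx] using this
  have alphainv : ∀ x : H, α⁻¹ x = α x := by
    intro x
    apply α.injective
    rw [Equiv.Perm.apply_inv_self, hinv]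
  intro h
  obtain ⟨g, hg, hgt⟩ := htrans t h
  have hAt : A t := root_in_A t (Equiv.Perm.SameCycle.refl τ t)
  have key : ∀ x : H, A x → A (g x) ∧ A (g⁻¹ x) := by
    refine Subgroup.closure_induction ?_ ?_ ?_ ?_ hg
    · rintro f (rfl | rfl)
      · exact fun x hx => ⟨tauA x hx, tauinvA x hx⟩
      · intro x hx
        refine ⟨alphaA x hx, ?_⟩
        rw [alphainv]
        exact alphaA x hx
    · intro x hx; constructor <;> simpa using hx
    · intro f1 f2 h1 h2 hf1 hf2 x hx
      constructor
      · rw [Equiv.Perm.mul_apply]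
        exact (hf1 _ ((hf2 x hx).1)).1
      · rw [mul_inv_rev, Equiv.Perm.mul_apply]
        exact (hf2 _ ((hf1 x hx).2)).2
    · intro f hf hfP x hx
      exact ⟨(hfP x hx).2, by rw [inv_inv]; exact (hfP x hx).1⟩
  exact hgt ▸ (key t hAt).1

end AuxiliaryLemmas

/-- folding step: given a plane tree `(τ,α)` rooted at `t` with
root-to-leaves orientation `(I,O)` and a mobile `π` coherently attached to it, the
permutation `σ = (τ'∘π_{|I'})_{|H}` together with `α` is a combinatorial map, the
orientation `(I,O)` is left-connected for it (rooted at `r = σ'(i)`), and the unfolding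
of `((σ,α),(I,O))` returns the given tree and mobile
(`π_{|I'} = σ'_{|I'}` and `π⁻¹_{|O'} = ((i,o)∘σ'∘α')_{|O'}`). -/
theorem folding_inverse_of_unfolding {H : Type*} [Fintype H] [DecidableEq H]
    (n : ℕ) (hn : 1 ≤ n) (hcard : Fintype.card H = 2 * n)
    (τ α : Equiv.Perm H)
    (hfpf : ∀ h, α h ≠ h) (hinv : ∀ h, α (α h) = h)
    (htrans : ∀ x y : H, ∃ g ∈ Subgroup.closure ({τ, α} : Set (Equiv.Perm H)), g x = y)
    (horb : numOrbitsOn (⇑τ) Set.univ = n + 1)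
    (t : H) (I O : Set H)
    (hpart : I ∪ O = Set.univ) (hdisj : I ∩ O = ∅) (hIO : α '' I = O) (ht : t ∈ O)
    (hroot : ∀ y ∈ I, ¬ τ.SameCycle t y)
    (hone : ∀ x : H, ¬ τ.SameCycle t x → ∃! y : H, y ∈ I ∧ τ.SameCycle x y)
    (π : Equiv.Perm (H ⊕ Bool))
    (htransπ : ∀ x y : H ⊕ Bool,
      ∃ g ∈ Subgroup.closure ({π, alphaExt α} : Set (Equiv.Perm (H ⊕ Bool))), g x = y)
    (hcyc : ∀ x y : H ⊕ Bool, ∃ k : ℕ, ((π * alphaExt α) ^ k) x = y)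
    (hbipπ : ∀ x y : H ⊕ Bool, π.SameCycle x y →
      (x ∈ (Sum.inl '' I ∪ {Sum.inr true} : Set (H ⊕ Bool)) ↔
       y ∈ (Sum.inl '' I ∪ {Sum.inr true} : Set (H ⊕ Bool))))
    (hcoh : ∀ h ∈ (Sum.inl '' I ∪ {Sum.inr true} : Set (H ⊕ Bool)),
      restrictFun (⇑(π * alphaExt α)⁻¹) (Sum.inl '' I ∪ {Sum.inr true}) h =
        alphaExt α (restrictFun
          (⇑(Equiv.swap (Sum.inr true : H ⊕ Bool) (Sum.inr false) * sigmaExt τ t * alphaExt α))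
          (Sum.inl '' O ∪ {Sum.inr false}) (alphaExt α h)))
    (πoI : Equiv.Perm (H ⊕ Bool))
    (hπoI : ⇑πoI = restrictFun (⇑π) (Sum.inl '' I ∪ {Sum.inr true}))
    (σ : Equiv.Perm H)
    (hσ : ∀ h : H, (Sum.inl (σ h) : H ⊕ Bool) =
      restrictFun (⇑(sigmaExt τ t * πoI))
        (Set.range (Sum.inl : H → H ⊕ Bool)) (Sum.inl h)) :
    ((∃ r : H, (sigmaExt τ t * πoI) (Sum.inr true) = Sum.inl r) ∧
      ∀ x y : H, ∃ g ∈ Subgroup.closure ({σ, α} : Set (Equiv.Perm H)), g x = y) ∧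
    (∀ r : H, (sigmaExt τ t * πoI) (Sum.inr true) = Sum.inl r →
      ∀ h : H, ∃ q : ℕ, 0 < q ∧ (backward σ α I)^[q] h = r) ∧
    ((∀ x : H ⊕ Bool,
        restrictFun (⇑π) (Sum.inl '' I ∪ {Sum.inr true}) x =
          restrictFun (⇑(sigmaExt τ t * πoI)) (Sum.inl '' I ∪ {Sum.inr true}) x) ∧
      (∀ x : H ⊕ Bool,
        restrictFun (⇑π⁻¹) (Sum.inl '' O ∪ {Sum.inr false}) x =
          restrictFun
            (⇑(Equiv.swap (Sum.inr true : H ⊕ Bool) (Sum.inr false) *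
                (sigmaExt τ t * πoI) * alphaExt α))
            (Sum.inl '' O ∪ {Sum.inr false}) x)) := by
    classical
  -- basic membership facts
  have hIorO : ∀ x : H, x ∈ I ∨ x ∈ O := by
    intro x
    have : x ∈ I ∪ O := by rw [hpart]; exact Set.mem_univ x
    exact this
  have hInotO : ∀ x : H, x ∈ I → x ∉ O := by
    intro x hxI hxO
    have : x ∈ I ∩ O := ⟨hxI, hxO⟩
    rw [hdisj] at this
    exact this
  have hOI : ∀ x ∈ O, α x ∈ I := by
    intro x hx
    rw [← hIO] at hx
    obtain ⟨y, hyI, hyx⟩ := hx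
    rw [← hyx, hinv y]; exact hyI
  have hIOm : ∀ x ∈ I, α x ∈ O := by
    intro x hx
    rw [← hIO]
    exact ⟨x, hx, rfl⟩
  have hmem_inl_SI : ∀ a : H,
      (Sum.inl a ∈ (Sum.inl '' I ∪ {Sum.inr true} : Set (H ⊕ Bool))) ↔ a ∈ I := by
    intro a; simp
  have hmem_inl_SO : ∀ a : H,
      (Sum.inl a ∈ (Sum.inl '' O ∪ {Sum.inr false} : Set (H ⊕ Bool))) ↔ a ∈ O := by
    intro a; simp
  have hi_SI : (Sum.inr true : H ⊕ Bool) ∈ (Sum.inl '' I ∪ {Sum.inr true} : Set (H ⊕ Bool)) :=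
    Or.inr rfl
  have ho_SO : (Sum.inr false : H ⊕ Bool) ∈ (Sum.inl '' O ∪ {Sum.inr false} : Set (H ⊕ Bool)) :=
    Or.inr rfl
  have ho_not_SI : (Sum.inr false : H ⊕ Bool) ∉ (Sum.inl '' I ∪ {Sum.inr true} : Set (H ⊕ Bool)) := by
    simp
  have hi_not_SO : (Sum.inr true : H ⊕ Bool) ∉ (Sum.inl '' O ∪ {Sum.inr false} : Set (H ⊕ Bool)) := by
    simp
  have hSO_of_not_SI : ∀ x : H ⊕ Bool, x ∉ (Sum.inl '' I ∪ {Sum.inr true} : Set (H ⊕ Bool)) →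
      x ∈ (Sum.inl '' O ∪ {Sum.inr false} : Set (H ⊕ Bool)) := by
    rintro (a | b) hx
    · rw [hmem_inl_SI] at hx
      exact (hmem_inl_SO a).2 ((hIorO a).resolve_left hx)
    · cases b with
      | true => exact absurd hi_SI hx
      | false => exact ho_SO
  have hSI_of_not_SO : ∀ x : H ⊕ Bool, x ∉ (Sum.inl '' O ∪ {Sum.inr false} : Set (H ⊕ Bool)) →
      x ∈ (Sum.inl '' I ∪ {Sum.inr true} : Set (H ⊕ Bool)) := by
    rintro (a | b) hx
    · rw [hmem_inl_SO] at hx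
      exact (hmem_inl_SI a).2 ((hIorO a).resolve_right hx)
    · cases b with
      | true => exact hi_SI
      | false => exact absurd ho_SO hx
  have hnot_SI_of_SO : ∀ x : H ⊕ Bool, x ∈ (Sum.inl '' O ∪ {Sum.inr false} : Set (H ⊕ Bool)) →
      x ∉ (Sum.inl '' I ∪ {Sum.inr true} : Set (H ⊕ Bool)) := by
    rintro (a | b) hx hx'
    · exact hInotO a ((hmem_inl_SI a).1 hx') ((hmem_inl_SO a).1 hx)
    · cases b with
      | true => exact hi_not_SO hx
      | false => exact ho_not_SI hx'
  have hα'α' : ∀ x : H ⊕ Bool, alphaExt α (alphaExt α x) = x := by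
    rintro (a | b)
    · rw [alphaExt_inl, alphaExt_inl, hinv]
    · cases b with
      | true => rw [alphaExt_true, alphaExt_false]
      | false => rw [alphaExt_false, alphaExt_true]
  have hα'inv : ∀ z : H ⊕ Bool, (alphaExt α)⁻¹ z = alphaExt α z := fun z =>
    (alphaExt α).injective (by rw [Equiv.Perm.apply_inv_self, hα'α'])
  have hα'SI : ∀ x ∈ (Sum.inl '' I ∪ {Sum.inr true} : Set (H ⊕ Bool)),
      alphaExt α x ∈ (Sum.inl '' O ∪ {Sum.inr false} : Set (H ⊕ Bool)) := by
    rintro (a | b) hx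
    · rw [alphaExt_inl]
      exact (hmem_inl_SO _).2 (hIOm a ((hmem_inl_SI a).1 hx))
    · cases b with
      | true => rw [alphaExt_true]; exact ho_SO
      | false => exact absurd hx ho_not_SI
  have hα'SO : ∀ x ∈ (Sum.inl '' O ∪ {Sum.inr false} : Set (H ⊕ Bool)),
      alphaExt α x ∈ (Sum.inl '' I ∪ {Sum.inr true} : Set (H ⊕ Bool)) := by
    rintro (a | b) hx
    · rw [alphaExt_inl]
      exact (hmem_inl_SI _).2 (hOI a ((hmem_inl_SO a).1 hx))
    · cases b with
      | true => exact absurd hx hi_not_SO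
      | false => rw [alphaExt_false]; exact hi_SI
  have hπSI : ∀ x ∈ (Sum.inl '' I ∪ {Sum.inr true} : Set (H ⊕ Bool)),
      π x ∈ (Sum.inl '' I ∪ {Sum.inr true} : Set (H ⊕ Bool)) :=
    fun x hx => (hbipπ x (π x) ⟨1, by simp⟩).1 hx
  have hπinv_iff : ∀ x : H ⊕ Bool,
      (π⁻¹ x ∈ (Sum.inl '' I ∪ {Sum.inr true} : Set (H ⊕ Bool))) ↔
        x ∈ (Sum.inl '' I ∪ {Sum.inr true} : Set (H ⊕ Bool)) :=
    fun x => hbipπ (π⁻¹ x) x ⟨1, by simp⟩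
  have hπinvSO : ∀ x ∈ (Sum.inl '' O ∪ {Sum.inr false} : Set (H ⊕ Bool)),
      π⁻¹ x ∈ (Sum.inl '' O ∪ {Sum.inr false} : Set (H ⊕ Bool)) :=
    fun x hx => hSO_of_not_SI _ (fun hc => hnot_SI_of_SO x hx ((hπinv_iff x).1 hc))
  have hπoI_mem : ∀ x ∈ (Sum.inl '' I ∪ {Sum.inr true} : Set (H ⊕ Bool)), πoI x = π x := by
    intro x hx
    rw [show (πoI x : H ⊕ Bool) = restrictFun (⇑π) (Sum.inl '' I ∪ {Sum.inr true}) x from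
      congrFun hπoI x]
    exact restrictFun_eq_of (⇑π) _ x hx 1 one_pos (by simpa using hπSI x hx)
      (fun j h1 h2 => absurd h2 (by omega))
  have hπoI_not : ∀ x : H ⊕ Bool, x ∉ (Sum.inl '' I ∪ {Sum.inr true} : Set (H ⊕ Bool)) →
      πoI x = x :=
    fun x hx => (congrFun hπoI x).trans (restrictFun_of_not_mem _ _ _ hx)
  have hct : τ.SameCycle t (τ⁻¹ t) := ⟨-1, by simp⟩
  have htinv_notI : τ⁻¹ t ∉ I := fun hI => hroot _ hI hct
  have htinvO : τ⁻¹ t ∈ O := (hIorO _).resolve_left htinv_notI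
  have hmul : ∀ x : H ⊕ Bool, (sigmaExt τ t * πoI) x = sigmaExt τ t (πoI x) := fun x => rfl
  have hs'O : ∀ h ∈ O, h ≠ τ⁻¹ t →
      (sigmaExt τ t * πoI) (Sum.inl h) = Sum.inl (τ h) := by
    intro h hhO hne
    rw [hmul, hπoI_not _ (fun hc => hInotO h ((hmem_inl_SI h).1 hc) hhO),
      sigmaExt_inl_ne τ t h hne]
  have hs'root : (sigmaExt τ t * πoI) (Sum.inl (τ⁻¹ t)) = Sum.inr true := by
    rw [hmul, hπoI_not _ (fun hc => htinv_notI ((hmem_inl_SI _).1 hc)), sigmaExt_root]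
  have hs'i : (sigmaExt τ t * πoI) (Sum.inr true) = sigmaExt τ t (π (Sum.inr true)) := by
    rw [hmul, hπoI_mem _ hi_SI]
  -- existence of the root half-edge r
  have hrex : ∃ r : H, (sigmaExt τ t * πoI) (Sum.inr true) = Sum.inl r := by
    have hmem := hπSI _ hi_SI
    cases he : π (Sum.inr true) with
    | inl a =>
      rw [he] at hmem
      have haI : a ∈ I := (hmem_inl_SI a).1 hmem
      have hne : a ≠ τ⁻¹ t := fun hc => htinv_notI (hc ▸ haI)
      exact ⟨τ a, by rw [hs'i, he, sigmaExt_inl_ne τ t a hne]⟩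
    | inr b =>
      cases b with
      | true => exact ⟨t, by rw [hs'i, he, sigmaExt_i]⟩
      | false => rw [he] at hmem; exact absurd hmem ho_not_SI
  -- values of σ on outgoing half-edges
  have hσO : ∀ h ∈ O, h ≠ τ⁻¹ t → σ h = τ h := by
    intro h hhO hne
    have e : restrictFun (⇑(sigmaExt τ t * πoI)) (Set.range (Sum.inl : H → H ⊕ Bool))
        (Sum.inl h) = Sum.inl (τ h) := by
      have e2 := restrictFun_eq_of (⇑(sigmaExt τ t * πoI))
        (Set.range (Sum.inl : H → H ⊕ Bool)) (Sum.inl h) ⟨h, rfl⟩ 1 one_pos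
        (by rw [Function.iterate_one, hs'O h hhO hne]; exact ⟨τ h, rfl⟩)
        (fun j h1 h2 => absurd h2 (by omega))
      rw [e2, Function.iterate_one, hs'O h hhO hne]
    exact Sum.inl_injective ((hσ h).trans e)
  have hσroot : ∀ r : H, (sigmaExt τ t * πoI) (Sum.inr true) = Sum.inl r → σ (τ⁻¹ t) = r := by
    intro r hr
    have hiter2 : (⇑(sigmaExt τ t * πoI))^[2] (Sum.inl (τ⁻¹ t)) = Sum.inl r := by
      rw [show (2 : ℕ) = 1 + 1 from rfl, Function.iterate_add_apply, Function.iterate_one,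
        hs'root, hr]
    have e : restrictFun (⇑(sigmaExt τ t * πoI)) (Set.range (Sum.inl : H → H ⊕ Bool))
        (Sum.inl (τ⁻¹ t)) = Sum.inl r := by
      have e2 := restrictFun_eq_of (⇑(sigmaExt τ t * πoI))
        (Set.range (Sum.inl : H → H ⊕ Bool)) (Sum.inl (τ⁻¹ t)) ⟨_, rfl⟩ 2 (by omega)
        (by rw [hiter2]; exact ⟨r, rfl⟩)
        (by
          intro j h1 h2
          have hj : j = 1 := by omega
          subst hj
          rw [Function.iterate_one, hs'root]
          simp)
      rw [e2, hiter2]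
    exact Sum.inl_injective ((hσ (τ⁻¹ t)).trans e)
  -- part (b) : left-connectedness
  have keyB : ∀ r : H, (sigmaExt τ t * πoI) (Sum.inr true) = Sum.inl r →
      ∀ h : H, ∃ q : ℕ, 0 < q ∧ (backward σ α I)^[q] h = r := by
    intro r hr
    have hσr := hσroot r hr
    have hstep : ∀ h : H, backward σ α I h = backward τ α I h ∨ backward σ α I h = r := by
      intro h
      by_cases hI : h ∈ I
      · rw [backward_of_mem σ α I h hI, backward_of_mem τ α I h hI]
        by_cases hc : α h = τ⁻¹ t
        · right; rw [hc, hσr]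
        · left; rw [hσO (α h) (hIOm h hI) hc]
      · rw [backward_of_not_mem σ α I h hI, backward_of_not_mem τ α I h hI]
        by_cases hc : h = τ⁻¹ t
        · right; rw [hc, hσr]
        · left; rw [hσO h ((hIorO h).resolve_left hI) hc]
    have main : ∀ (m : ℕ) (h : H), (backward τ α I)^[m] h = τ⁻¹ t →
        ∃ q : ℕ, 0 < q ∧ (backward σ α I)^[q] h = r := by
      intro m
      induction m with
      | zero =>
        intro h hh
        simp only [Function.iterate_zero, id] at hh
        subst hh
        exact ⟨1, one_pos, by
          rw [Function.iterate_one, backward_of_not_mem σ α I _ htinv_notI, hσr]⟩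
      | succ m ih =>
        intro h hh
        rcases hstep h with he | he
        · rw [Function.iterate_succ_apply, ← he] at hh
          obtain ⟨q, hq0, hq⟩ := ih (backward σ α I h) hh
          exact ⟨q + 1, by omega, by rw [Function.iterate_succ_apply, hq]⟩
        · exact ⟨1, one_pos, by rw [Function.iterate_one, he]⟩
    intro h
    obtain ⟨m, hm⟩ := tree_backward_reaches τ α hinv htrans t I O hpart hIO hroot hone h
    exact main m h hm
  refine ⟨⟨hrex, ?_⟩, keyB, ?_, ?_⟩
  · -- transitivity of ⟨σ, α⟩
    obtain ⟨r, hr⟩ := hrex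
    have reach := keyB r hr
    have hσmem : σ ∈ Subgroup.closure ({σ, α} : Set (Equiv.Perm H)) :=
      Subgroup.subset_closure (Set.mem_insert _ _)
    have hαmem : α ∈ Subgroup.closure ({σ, α} : Set (Equiv.Perm H)) :=
      Subgroup.subset_closure (Set.mem_insert_of_mem _ rfl)
    have conn : ∀ (q : ℕ) (h : H), ∃ g ∈ Subgroup.closure ({σ, α} : Set (Equiv.Perm H)),
        g h = (backward σ α I)^[q] h := by
      intro q
      induction q with
      | zero => intro h; exact ⟨1, one_mem _, rfl⟩
      | succ q ih =>
        intro h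
        obtain ⟨g, hg, hgh⟩ := ih h
        by_cases hI : (backward σ α I)^[q] h ∈ I
        · refine ⟨σ * α * g, mul_mem (mul_mem hσmem hαmem) hg, ?_⟩
          rw [Function.iterate_succ_apply', backward_of_mem σ α I _ hI, ← hgh]
          simp [Equiv.Perm.mul_apply]
        · refine ⟨σ * g, mul_mem hσmem hg, ?_⟩
          rw [Function.iterate_succ_apply', backward_of_not_mem σ α I _ hI, ← hgh]
          simp [Equiv.Perm.mul_apply]
    intro x y
    obtain ⟨qx, -, hqx⟩ := reach x
    obtain ⟨qy, -, hqy⟩ := reach y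
    obtain ⟨g1, hg1, he1⟩ := conn qx x
    obtain ⟨g2, hg2, he2⟩ := conn qy y
    refine ⟨g2⁻¹ * g1, mul_mem (inv_mem hg2) hg1, ?_⟩
    rw [Equiv.Perm.mul_apply, he1, hqx, ← hqy, ← he2, Equiv.Perm.inv_apply_self]
  · -- part (c)(i)
    intro x
    by_cases hx : x ∈ (Sum.inl '' I ∪ {Sum.inr true} : Set (H ⊕ Bool))
    · have hL : restrictFun (⇑π) (Sum.inl '' I ∪ {Sum.inr true}) x = π x :=
        restrictFun_eq_of (⇑π) _ x hx 1 one_pos (by simpa using hπSI x hx)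
          (fun j h1 h2 => absurd h2 (by omega))
      have hco : (⇑(sigmaExt τ t * πoI) : H ⊕ Bool → H ⊕ Bool) = ⇑(sigmaExt τ t) ∘ ⇑πoI := rfl
      have hR : restrictFun (⇑(sigmaExt τ t * πoI)) (Sum.inl '' I ∪ {Sum.inr true}) x
          = π x := by
        rw [hco, FR_comp (⇑(sigmaExt τ t)) (⇑πoI) _ hπoI_not x hx
          (by rw [hπoI_mem x hx]; exact hπSI x hx)
          (by rw [hπoI_mem x hx]; exact exists_iterate_mem (sigmaExt τ t) _ (π x) (hπSI x hx)),
          hπoI_mem x hx]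
        exact sigmaExt_fr τ t I hroot hone (π x) (hπSI x hx)
      rw [hL, hR]
    · rw [restrictFun_of_not_mem _ _ _ hx, restrictFun_of_not_mem _ _ _ hx]
  · -- part (c)(ii)
    intro x
    by_cases hx : x ∈ (Sum.inl '' O ∪ {Sum.inr false} : Set (H ⊕ Bool))
    · have hL : restrictFun (⇑π⁻¹) (Sum.inl '' O ∪ {Sum.inr false}) x = π⁻¹ x :=
        restrictFun_eq_of (⇑π⁻¹) _ x hx 1 one_pos (by simpa using hπinvSO x hx)
          (fun j h1 h2 => absurd h2 (by omega))
      have hαxSI : alphaExt α x ∈ (Sum.inl '' I ∪ {Sum.inr true} : Set (H ⊕ Bool)) :=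
        hα'SO x hx
      have hhSI : π (alphaExt α x) ∈ (Sum.inl '' I ∪ {Sum.inr true} : Set (H ⊕ Bool)) :=
        hπSI _ hαxSI
      have hfeq : (⇑(Equiv.swap (Sum.inr true : H ⊕ Bool) (Sum.inr false) *
            (sigmaExt τ t * πoI) * alphaExt α) : H ⊕ Bool → H ⊕ Bool) =
          (⇑(Equiv.swap (Sum.inr true : H ⊕ Bool) (Sum.inr false) * sigmaExt τ t * alphaExt α))
            ∘ (fun z => alphaExt α (πoI (alphaExt α z))) := by
        funext z
        simp only [Equiv.Perm.mul_apply, Function.comp_apply]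
        rw [hα'α']
      have hvO : ∀ z : H ⊕ Bool, z ∉ (Sum.inl '' O ∪ {Sum.inr false} : Set (H ⊕ Bool)) →
          alphaExt α (πoI (alphaExt α z)) = z := by
        intro z hz
        rw [hπoI_not _ (hnot_SI_of_SO _ (hα'SI z (hSI_of_not_SO z hz))), hα'α']
      have hvx : alphaExt α (πoI (alphaExt α x)) ∈
          (Sum.inl '' O ∪ {Sum.inr false} : Set (H ⊕ Bool)) := by
        rw [hπoI_mem _ hαxSI]
        exact hα'SI _ hhSI
      have hg : ∀ z : H ⊕ Bool, (⇑(π * alphaExt α)⁻¹) z = alphaExt α (π⁻¹ z) := by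
        intro z
        rw [mul_inv_rev, Equiv.Perm.mul_apply, hα'inv]
      have h2v : (⇑(π * alphaExt α)⁻¹)^[2] (π (alphaExt α x)) = alphaExt α (π⁻¹ x) := by
        rw [show (2 : ℕ) = 1 + 1 from rfl, Function.iterate_add_apply, Function.iterate_one]
        simp only [hg]
        rw [Equiv.Perm.inv_apply_self, hα'α']
      have hLc : restrictFun (⇑(π * alphaExt α)⁻¹) (Sum.inl '' I ∪ {Sum.inr true})
          (π (alphaExt α x)) = alphaExt α (π⁻¹ x) := by
        have e := restrictFun_eq_of (⇑(π * alphaExt α)⁻¹) (Sum.inl '' I ∪ {Sum.inr true})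
          (π (alphaExt α x)) hhSI 2 (by omega)
          (by rw [h2v]; exact hα'SO _ (hπinvSO x hx))
          (by
            intro j h1 h2
            have hj : j = 1 := by omega
            subst hj
            rw [Function.iterate_one, hg, Equiv.Perm.inv_apply_self, hα'α']
            exact hnot_SI_of_SO x hx)
        rw [e, h2v]
      have hc := hcoh _ hhSI
      rw [hLc] at hc
      have hval : restrictFun
          (⇑(Equiv.swap (Sum.inr true : H ⊕ Bool) (Sum.inr false) * sigmaExt τ t * alphaExt α))
          (Sum.inl '' O ∪ {Sum.inr false}) (alphaExt α (π (alphaExt α x))) = π⁻¹ x :=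
        ((alphaExt α).injective hc).symm
      have hR : restrictFun
          (⇑(Equiv.swap (Sum.inr true : H ⊕ Bool) (Sum.inr false) *
            (sigmaExt τ t * πoI) * alphaExt α))
          (Sum.inl '' O ∪ {Sum.inr false}) x = π⁻¹ x := by
        rw [hfeq, FR_comp _ _ _ hvO x hx hvx
          (exists_iterate_mem (Equiv.swap (Sum.inr true : H ⊕ Bool) (Sum.inr false) *
            sigmaExt τ t * alphaExt α) _ _ hvx),
          hπoI_mem _ hαxSI]
        exact hval
      rw [hL, hR]
    · rw [restrictFun_of_not_mem _ _ _ hx, restrictFun_of_not_mem _ _ _ hx]
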